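/- arXiv:1411.3486 — 3 statements merged into one kernel-verified Lean document; each statement's English description precedes it below -/
import Mathlib

section
/- For any integer m ≥ 2, the polynomial 2x(1+x)^{m-2} + 1 in ℤ[x] is irreducible over ℚ. -/
open Polynomial

private lemma aux_isUnit_of_reverse {K : Type*} [Field K] {g : K[X]}
    (h : IsUnit g.reverse) (h0 : g.coeff 0 ≠ 0) : IsUnit g := by
  have htd : g.natTrailingDegree = 0 := natTrailingDegree_eq_zero.mpr (Or.inr h0)
  have hd : g.reverse.natDegree = 0 := natDegree_eq_zero_of_isUnit h
  rw [reverse_natDegree, htd, Nat.sub_zero] at hd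
  rw [eq_C_of_natDegree_eq_zero hd]
  exact isUnit_C.mpr h0.isUnit

private lemma aux_irreducible_of_reverse {K : Type*} [Field K] {f : K[X]}
    (hi : Irreducible f.reverse) (h0 : f.coeff 0 ≠ 0) (hd : 0 < f.natDegree) :
    Irreducible f := by
  constructor
  · intro hu
    simp [natDegree_eq_zero_of_isUnit hu] at hd
  · intro g h hgh
    have hf0 : f.coeff 0 = g.coeff 0 * h.coeff 0 := by rw [hgh, mul_coeff_zero]
    have hg0 : g.coeff 0 ≠ 0 := fun hg => h0 (by simp [hf0, hg])
    have hh0 : h.coeff 0 ≠ 0 := fun hh => h0 (by simp [hf0, hh])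
    have hrev : f.reverse = g.reverse * h.reverse := by
      rw [hgh, reverse_mul_of_domain]
    rcases hi.isUnit_or_isUnit hrev with hu | hu
    · exact Or.inl (aux_isUnit_of_reverse hu hg0)
    · exact Or.inr (aux_isUnit_of_reverse hu hh0)

/-- For any integer m ≥ 2, the polynomial 2x(1+x)^{m-2} + 1 in ℤ[x] is irreducible over ℚ. -/
theorem stmt0 (m : ℕ) (hm : 2 ≤ m) :
    Irreducible ((C 2 * X * (1 + X) ^ (m - 2) + 1 : ℤ[X]).map (Int.castRingHom ℚ)) := by
  obtain ⟨n, rfl⟩ : ∃ n, m = n + 2 := ⟨m - 2, by omega⟩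
  simp only [Nat.add_sub_cancel]
  have hmap : ((C 2 * X * (1 + X) ^ n + 1 : ℤ[X]).map (Int.castRingHom ℚ))
      = (C 2 * X * (1 + X) ^ n + 1 : ℚ[X]) := by
    simp only [Polynomial.map_add, Polynomial.map_mul, Polynomial.map_pow,
      Polynomial.map_one, Polynomial.map_X, Polynomial.map_C]
    norm_num
  rw [hmap]
  rcases Nat.eq_zero_or_pos n with rfl | hn1
  · -- n = 0 : polynomial is 2X + 1, degree 1
    apply irreducible_of_degree_eq_one
    compute_degree!
  · -- n ≥ 1
    set r : ℤ[X] := X ^ (n + 1) - (C 2 * X - C 2) with hr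
    have hrdeg : (C 2 * X - C 2 : ℤ[X]).degree < (n + 1 : ℕ) := by
      have h1 : (C 2 * X - C 2 : ℤ[X]).degree ≤ 1 := by compute_degree
      exact lt_of_le_of_lt h1 (by exact_mod_cast Nat.succ_lt_succ hn1)
    have hmon : r.Monic := monic_X_pow_sub hrdeg
    have hrnatdeg : r.natDegree = n + 1 := by
      rw [hr]
      compute_degree!
      simp [hn1.ne', Int.subNatNat]
    have hrdegree : r.degree = (n + 1 : ℕ) := by
      rw [degree_eq_natDegree hmon.ne_zero, hrnatdeg]
    have hirr_r : Irreducible r := by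
      apply irreducible_of_eisenstein_criterion
        (P := Ideal.span {(2 : ℤ)})
        ((Ideal.span_singleton_prime (by norm_num)).mpr Int.prime_two)
      · rw [hmon.leadingCoeff, Ideal.mem_span_singleton]
        norm_num
      · intro k hk
        rw [hrdegree, Nat.cast_lt] at hk
        have h2 : ¬(n + 1 = k) := by omega
        have h2' : ¬(k = n + 1) := by omega
        rw [Ideal.mem_span_singleton, hr]
        simp only [coeff_sub, coeff_X_pow, coeff_C, coeff_C_mul, coeff_X, if_neg h2, if_neg h2']
        split_ifs <;> norm_num
      · rw [hrdegree]
        exact_mod_cast Nat.succ_pos n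
      · rw [Ideal.span_singleton_pow, Ideal.mem_span_singleton, hr]
        simp only [coeff_sub, coeff_X_pow, coeff_C_mul, coeff_X, coeff_C]
        norm_num
      · exact hmon.isPrimitive
    have hirr_rQ : Irreducible (r.map (Int.castRingHom ℚ)) :=
      (Polynomial.IsPrimitive.Int.irreducible_iff_irreducible_map_cast
        hmon.isPrimitive).mp hirr_r
    set q : ℚ[X] := C 2 * X ^ (n + 1) - C 2 * X ^ n + 1 with hq
    have hqdeg : q.natDegree = n + 1 := by
      rw [hq]
      compute_degree!
    have hqrev : q.reverse = r.map (Int.castRingHom ℚ) := by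
      rw [reverse, hqdeg, hq]
      have h1 : (1 : ℚ[X]) = C 1 * X ^ 0 := by simp
      rw [h1, reflect_add, reflect_sub, reflect_C_mul_X_pow, reflect_C_mul_X_pow,
        reflect_C_mul_X_pow, revAt_le (le_refl (n + 1)), revAt_le (Nat.le_succ n),
        revAt_le (Nat.zero_le (n + 1))]
      simp only [Nat.sub_self, Nat.succ_sub (le_refl n), Nat.sub_zero, hr]
      simp only [Polynomial.map_sub, Polynomial.map_pow, Polynomial.map_mul,
        Polynomial.map_X, Polynomial.map_C, Polynomial.map_ofNat, map_ofNat, map_one, C_1]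
      push_cast
      ring
    have hirr_q : Irreducible q := by
      apply aux_irreducible_of_reverse (hqrev ▸ hirr_rQ)
      · have hne : ¬(0 = n) := by omega
        have hne' : ¬(n = 0) := by omega
        simp [hq, hne, hne']
      · rw [hqdeg]; omega
    have key : Irreducible (q.comp (X + Polynomial.C (1 : ℚ))) := by
      have := (MulEquiv.irreducible_iff
        (algEquivAevalXAddC (1 : ℚ)).toMulEquiv).mpr hirr_q
      simpa [algEquivAevalXAddC, ← comp_eq_aeval] using this
    have hcomp : q.comp (X + Polynomial.C (1 : ℚ)) = C 2 * X * (1 + X) ^ n + 1 := by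
      rw [hq]
      simp only [add_comp, sub_comp, mul_comp, pow_comp, C_comp, X_comp, one_comp, C_1]
      ring
    rwa [hcomp] at key
end

section
/- Let m ≥ 3 be odd and let ξ = e^{2πi/m}. Then for every i with 1 ≤ i ≤ (m-1)/2, one has 2ξ^i(1+ξ^i)^{m-2} + 1 ≠ 0. -/
/-- Let m ≥ 3 be odd and ξ = e^{2πi/m}. Then for 1 ≤ i ≤ (m-1)/2,
    2ξ^i(1+ξ^i)^{m-2} + 1 ≠ 0. -/
theorem stmt1 (m : ℕ) (hm : 3 ≤ m) (hodd : Odd m)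
    (ξ : ℂ) (hξ : ξ = Complex.exp (2 * Real.pi * Complex.I / m))
    (i : ℕ) (hi1 : 1 ≤ i) (hi2 : i ≤ (m - 1) / 2) :
    2 * ξ ^ i * (1 + ξ ^ i) ^ (m - 2) + 1 ≠ 0 := by
  intro h
  have hm0 : (m : ℂ) ≠ 0 := by
    exact_mod_cast Nat.cast_ne_zero.mpr (by omega)
  have hξm : ξ ^ m = 1 := by
    rw [hξ, ← Complex.exp_nat_mul]
    have : (m : ℂ) * (2 * Real.pi * Complex.I / m) = 2 * Real.pi * Complex.I := by
      field_simp
    rw [this, Complex.exp_two_pi_mul_I]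
  have hint : IsIntegral ℤ ξ := by
    refine ⟨Polynomial.X ^ m - 1, ?_, ?_⟩
    · simpa using Polynomial.monic_X_pow_sub_C (1 : ℤ) (by omega : m ≠ 0)
    · simp [hξm]
  have ht : IsIntegral ℤ (ξ ^ i * (1 + ξ ^ i) ^ (m - 2)) :=
    (hint.pow i).mul ((isIntegral_one.add (hint.pow i)).pow (m - 2))
  have heq : ξ ^ i * (1 + ξ ^ i) ^ (m - 2) = algebraMap ℚ ℂ (-(1/2)) := by
    have : (algebraMap ℚ ℂ) (-(1/2)) = -(1/2 : ℂ) := by norm_num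
    rw [this]
    linear_combination h / 2
  rw [heq, isIntegral_algebraMap_iff (algebraMap ℚ ℂ).injective] at ht
  obtain ⟨y, hy⟩ := IsIntegrallyClosed.isIntegral_iff.mp ht
  have h2 : (2 * y : ℚ) = -1 := by
    rw [show ((y : ℚ)) = algebraMap ℤ ℚ y from rfl, hy]; ring
  have h3 : (2 * y : ℤ) = -1 := by exact_mod_cast h2
  omega
end

section
/- Let m ≥ 3 be odd, ξ = e^{2πi/m}, and 1 ≤ i ≤ (m-1)/2. Then 1+ξ^i ≠ 0, and the point (1/(1+ξ^i)^m, 1, ξ^i/(1+ξ^i)^2, ξ^i/(1+ξ^i)^2) ∈ (ℂ*)^4 does not lie on the hyperplane {p₁ + p₂ + p₃ + p₄ = 1}. -/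
lemma quarter_not_integral : ¬ IsIntegral ℤ ((1/4 : ℂ)) := by
  intro h
  have hmap : (algebraMap ℚ ℂ) (1/4 : ℚ) = (1/4 : ℂ) := by norm_num
  have h2 : IsIntegral ℤ ((1/4 : ℚ)) := by
    rw [← isIntegral_algebraMap_iff (algebraMap ℚ ℂ).injective]
    rw [hmap]; exact h
  obtain ⟨y, hy⟩ := IsIntegrallyClosed.isIntegral_iff.mp h2
  have : ((4 * y : ℤ) : ℚ) = 1 := by push_cast; rw [show ((y:ℚ)) = 1/4 from hy]; ring
  have : (4 * y : ℤ) = 1 := by exact_mod_cast this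
  omega

/-- Let m ≥ 3 be odd, ξ = e^{2πi/m}, 1 ≤ i ≤ (m-1)/2. Then 1+ξ^i ≠ 0, the point
    (1/(1+ξ^i)^m, 1, ξ^i/(1+ξ^i)^2, ξ^i/(1+ξ^i)^2) lies in (ℂ*)^4, and it does not lie on
    the hyperplane {p₁+p₂+p₃+p₄ = 1}. -/
theorem stmt2 (m : ℕ) (hm : 3 ≤ m) (hodd : Odd m)
    (ξ : ℂ) (hξ : ξ = Complex.exp (2 * Real.pi * Complex.I / m))
    (i : ℕ) (hi1 : 1 ≤ i) (hi2 : i ≤ (m - 1) / 2) :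
    1 + ξ ^ i ≠ 0 ∧
    (1 / (1 + ξ ^ i) ^ m ≠ 0 ∧ ξ ^ i / (1 + ξ ^ i) ^ 2 ≠ 0) ∧
    1 / (1 + ξ ^ i) ^ m + 1 + ξ ^ i / (1 + ξ ^ i) ^ 2 + ξ ^ i / (1 + ξ ^ i) ^ 2 ≠ 1 := by
  have hm0 : (m : ℂ) ≠ 0 := by exact_mod_cast (by omega : m ≠ 0)
  set z : ℂ := ξ ^ i with hz
  have hξm : ξ ^ m = 1 := by
    rw [hξ, ← Complex.exp_nat_mul]
    rw [show (m : ℂ) * (2 * Real.pi * Complex.I / m) = 2 * Real.pi * Complex.I by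
      field_simp]
    exact Complex.exp_two_pi_mul_I
  have hzm : z ^ m = 1 := by
    rw [hz, ← pow_mul, mul_comm, pow_mul, hξm, one_pow]
  have hz0 : z ≠ 0 := by
    intro h; rw [h, zero_pow (by omega : m ≠ 0)] at hzm; exact zero_ne_one hzm
  have hz1 : 1 + z ≠ 0 := by
    intro h
    have : z = -1 := by linear_combination h
    rw [this, hodd.neg_one_pow] at hzm
    have : (2:ℂ) = 0 := by linear_combination -hzm
    norm_num at this
  have hconjξ : (starRingEnd ℂ) ξ = ξ⁻¹ := by
    rw [hξ, ← Complex.exp_conj, ← Complex.exp_neg]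
    congr 1
    rw [map_div₀, map_mul, map_mul, Complex.conj_I, Complex.conj_ofReal,
      Complex.conj_natCast, map_ofNat]
    ring
  have hconjz : (starRingEnd ℂ) z = z⁻¹ := by
    rw [hz, map_pow, hconjξ, inv_pow]
  refine ⟨hz1, ⟨one_div_ne_zero (pow_ne_zero _ hz1),
    div_ne_zero hz0 (pow_ne_zero 2 hz1)⟩, ?_⟩
  intro hS
  obtain ⟨k, hk⟩ : ∃ k, m = k + 2 := ⟨m - 2, by omega⟩
  have key : 2 * z * (1 + z) ^ k = -1 := by
    have h1 : 1 / (1 + z) ^ (k+2) + 2 * z / (1 + z) ^ 2 = 0 := by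
      rw [← hk]; linear_combination hS
    have h2 : (1 / (1 + z) ^ (k+2) + 2 * z / (1 + z) ^ 2) * (1 + z) ^ (k+2) = 0 := by
      rw [h1, zero_mul]
    have h3 : (1 / (1 + z) ^ (k+2) + 2 * z / (1 + z) ^ 2) * (1 + z) ^ (k+2)
        = 1 + 2 * z * (1 + z) ^ k := by
      field_simp
      ring
    linear_combination h2 - h3
  set w := (starRingEnd ℂ) z with hw
  have keyc : 2 * w * (1 + w) ^ k = -1 := by
    have := congrArg (starRingEnd ℂ) key
    simpa [map_ofNat] using this
  have hzw : z * w = 1 := by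
    rw [hconjz, mul_inv_cancel₀ hz0]
  have hc : ((1 + z) * (1 + w)) ^ k = 1 / 4 := by
    have hmul : 2 * z * (1 + z) ^ k * (2 * w * (1 + w) ^ k) = -1 * -1 :=
      congrArg₂ (· * ·) key keyc
    rw [mul_pow]
    linear_combination (hmul - 4 * (1+w)^k * (1+z)^k * hzw) / 4
  have hz_int : IsIntegral ℤ z := by
    refine ⟨Polynomial.X ^ m - 1, ?_, ?_⟩
    · simpa using Polynomial.monic_X_pow_sub_C (1:ℤ) (by omega : m ≠ 0)
    · simp [hzm]
  have hw_int : IsIntegral ℤ w := by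
    have hmu : z ^ (m-1) * z = 1 := by
      rw [← pow_succ, show m-1+1 = m by omega, hzm]
    have : w = z ^ (m - 1) := by
      rw [hconjz]
      exact inv_eq_of_mul_eq_one_left hmu
    rw [this]; exact hz_int.pow _
  have hc_int : IsIntegral ℤ (((1 + z) * (1 + w)) ^ k) :=
    ((isIntegral_one.add hz_int).mul (isIntegral_one.add hw_int)).pow _
  rw [hc] at hc_int
  exact quarter_not_integral hc_int
end
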